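/- Define a sequence of Laurent polynomials by the recursion f(0, n) = 1 for all n, and f(m, n) = t² · f(m-1, n) + t^{2n-1+1} - t^{2n+1+1} for m > 0, f(m, n) = t^{-2} · f(m+1, n) + (−1)·(t^{2n-1-1} − t^{2n+1-1}) for m < 0. Then f(m, n) = t^{2m} + t^{2n} - t^{2m+2n} for all integers m and all integers n. -/

import Mathlib

open LaurentPolynomial

theorem stmt_7 (f : ℤ → ℤ → LaurentPolynomial ℤ)
    (h0 : ∀ n : ℤ, f 0 n = 1)
    (hpos : ∀ m n : ℤ, 0 < m →
      f m n = T 2 * f (m - 1) n + T (2 * n - 1 + 1) - T (2 * n + 1 + 1))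
    (hneg : ∀ m n : ℤ, m < 0 →
      f m n = T (-2) * f (m + 1) n + (-1) * (T (2 * n - 1 - 1) - T (2 * n + 1 - 1))) :
    ∀ m n : ℤ, f m n = T (2 * m) + T (2 * n) - T (2 * m + 2 * n) := by
  intro m
  induction m using Int.induction_on with
  | zero =>
    intro n
    rw [h0]
    simp [← T_add]
  | succ k ih =>
    intro n
    rw [hpos (k + 1) n (by positivity)]
    have : ((k : ℤ) + 1 - 1) = k := by ring
    rw [this, ih n]
    simp only [← T_add, mul_add, mul_sub, ← T_add]
    ring_nf
  | pred k ih =>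
    intro n
    rw [hneg (-(k : ℤ) - 1) n (by omega)]
    have : (-(k : ℤ) - 1 + 1) = -k := by ring
    rw [this, ih n]
    simp only [← T_add, mul_add, mul_sub, neg_one_mul, ← T_add]
    ring_nf
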